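/- For any positive integers q and h, the sum over all integers a of max(h-|a|,0)·c_q(a) equals [q=1]·h² + Σ_{d|q} d²·μ(q/d)·{h/d}·(1-{h/d}), where c_q(a) is the Ramanujan sum, μ is the Möbius function, and [q=1] is 1 if q=1 and 0 otherwise. -/

import Mathlib

open Finset

/-- The Ramanujan sum `c_q(a) = Σ_{j mod q, gcd(j,q)=1} e^{2πija/q}`. -/
noncomputable def ramanujanSum (q : ℕ) (a : ℤ) : ℂ :=
  ∑ j ∈ (Finset.range q).filter (fun j => Nat.Coprime j q),
    Complex.exp (2 * Real.pi * Complex.I * (j : ℂ) * (a : ℂ) / (q : ℂ))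

open ArithmeticFunction


lemma sum_exp_eq (e : ℕ) (he : 0 < e) (a : ℤ) :
    ∑ j ∈ Finset.range e, Complex.exp (2 * Real.pi * Complex.I * (j:ℂ) * (a:ℂ) / (e:ℂ)) =
      if (e:ℤ) ∣ a then (e:ℂ) else 0 := by
  have he' : (e:ℂ) ≠ 0 := Nat.cast_ne_zero.mpr he.ne'
  set z : ℂ := Complex.exp (2 * Real.pi * Complex.I * (a:ℂ) / (e:ℂ)) with hz
  have hpow : ∀ j : ℕ, Complex.exp (2 * Real.pi * Complex.I * (j:ℂ) * (a:ℂ) / (e:ℂ)) = z ^ j := by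
    intro j
    rw [hz, ← Complex.exp_nat_mul]
    congr 1
    field_simp
  rw [Finset.sum_congr rfl fun j _ => hpow j]
  by_cases hd : (e:ℤ) ∣ a
  · obtain ⟨k, hk⟩ := hd
    have hz1 : z = 1 := by
      rw [hz, hk]
      push_cast
      rw [show 2 * Real.pi * Complex.I * ((e:ℂ)*(k:ℂ)) / (e:ℂ) = (k:ℂ) * (2*Real.pi*Complex.I) by
        field_simp]
      exact Complex.exp_int_mul_two_pi_mul_I k
    have : (e:ℤ) ∣ a := ⟨k, hk⟩
    simp [hz1, this]
  · have h2pi : (2 * (Real.pi:ℂ) * Complex.I) ≠ 0 := by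
      simp [Real.pi_ne_zero, Complex.I_ne_zero]
    have hz1 : z ≠ 1 := by
      intro h1
      rw [hz, Complex.exp_eq_one_iff] at h1
      obtain ⟨n, hn⟩ := h1
      apply hd
      have h3 : (2 * (Real.pi:ℂ) * Complex.I) * ((a:ℂ)/(e:ℂ)) = (2 * (Real.pi:ℂ) * Complex.I) * (n:ℂ) := by
        rw [mul_div_assoc] at hn
        rw [hn]; ring
      have h4 : (a:ℂ) = (n:ℂ) * (e:ℂ) := by
        have := mul_left_cancel₀ h2pi h3
        field_simp at this
        linear_combination this
      refine ⟨n, ?_⟩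
      exact_mod_cast h4.trans (mul_comm _ _)
    have hze : z ^ e = 1 := by
      rw [hz, ← Complex.exp_nat_mul,
        show (e:ℂ) * (2*Real.pi*Complex.I*(a:ℂ)/(e:ℂ)) = (a:ℂ)*(2*Real.pi*Complex.I) by
          field_simp]
      exact_mod_cast Complex.exp_int_mul_two_pi_mul_I a
    rw [geom_sum_eq hz1, hze]
    simp [hd]



lemma sum_abs_Icc (M : ℕ) : ∑ m ∈ Finset.Icc (-(M:ℤ)) (M:ℤ), |m| = M * (M+1) := by
  induction M with
  | zero => simp
  | succ M ih =>
    have hins : Finset.Icc (-((M:ℤ)+1)) ((M:ℤ)+1)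
        = insert (-((M:ℤ)+1)) (insert (((M:ℤ)+1)) (Finset.Icc (-(M:ℤ)) (M:ℤ))) := by
      ext x; simp only [Finset.mem_Icc, Finset.mem_insert]; omega
    push_cast
    rw [hins, Finset.sum_insert, Finset.sum_insert, ih]
    · rw [abs_neg, abs_of_nonneg (by positivity : (0:ℤ) ≤ (M:ℤ)+1)]
      push_cast; ring
    · simp only [Finset.mem_Icc]; omega
    · simp only [Finset.mem_insert, Finset.mem_Icc]; omega

lemma fejer_multiple_sum (h d : ℕ) (hh : 0 < h) (hd : 0 < d) :
    ∑ a ∈ Finset.Icc (-(h:ℤ)) (h:ℤ), (if (d:ℤ) ∣ a then max ((h:ℝ) - |(a:ℝ)|) 0 else 0)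
      = (h:ℝ)^2 / d + d * Int.fract ((h:ℝ)/d) * (1 - Int.fract ((h:ℝ)/d)) := by
  set M := h / d with hM
  have hdM : d * M ≤ h := Nat.mul_div_le h d
  have hdM' : (d:ℤ) * M ≤ h := by exact_mod_cast hdM
  have hlt : (h:ℤ) < d * (M+1) := by
    have h1 : h % d < d := Nat.mod_lt _ hd
    have h2 : d * M + h % d = h := Nat.div_add_mod h d
    have h3 : h < d * (M+1) := by rw [Nat.mul_succ]; omega
    exact_mod_cast h3
  have hd0 : (d:ℤ) ≠ 0 := by exact_mod_cast hd.ne'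
  have hd0' : (0:ℤ) < (d:ℤ) := by exact_mod_cast hd
  have hb : ∀ k : ℤ, -(h:ℤ) ≤ d*k → d*k ≤ h → -(M:ℤ) ≤ k ∧ k ≤ (M:ℤ) := by
    intro k h1 h2
    constructor
    · have h3 : (d:ℤ)*(-((M:ℤ)+1)) < d*k := by linarith
      have := lt_of_mul_lt_mul_left h3 (le_of_lt hd0')
      omega
    · have h3 : (d:ℤ)*k < d*((M:ℤ)+1) := by linarith
      have := lt_of_mul_lt_mul_left h3 (le_of_lt hd0')
      omega
  have key : ∑ a ∈ Finset.Icc (-(h:ℤ)) (h:ℤ), (if (d:ℤ) ∣ a then max ((h:ℝ) - |(a:ℝ)|) 0 else 0)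
      = ∑ m ∈ Finset.Icc (-(M:ℤ)) (M:ℤ), ((h:ℝ) - d * |(m:ℝ)|) := by
    rw [← Finset.sum_filter]
    refine Finset.sum_nbij' (fun a => a / d) (fun m => d * m) ?_ ?_ ?_ ?_ ?_
    · intro a ha
      simp only [Finset.mem_filter, Finset.mem_Icc] at ha ⊢
      obtain ⟨⟨h1, h2⟩, k, hk⟩ := ha
      subst hk
      simp only [Int.mul_ediv_cancel_left _ hd0]
      exact hb k h1 h2
    · intro m hm
      simp only [Finset.mem_filter, Finset.mem_Icc] at hm ⊢
      obtain ⟨h1, h2⟩ := hm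
      refine ⟨⟨?_, ?_⟩, ⟨m, rfl⟩⟩
      · have := mul_le_mul_of_nonneg_left h1 (le_of_lt hd0')
        linarith
      · have := mul_le_mul_of_nonneg_left h2 (le_of_lt hd0')
        linarith
    · intro a ha
      simp only [Finset.mem_filter] at ha
      obtain ⟨-, k, hk⟩ := ha
      subst hk
      simp only [Int.mul_ediv_cancel_left _ hd0]
    · intro m _
      simp only [Int.mul_ediv_cancel_left _ hd0]
    · intro a ha
      simp only [Finset.mem_filter, Finset.mem_Icc] at ha
      obtain ⟨⟨h1, h2⟩, k, hk⟩ := ha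
      subst hk
      simp only [Int.mul_ediv_cancel_left _ hd0]
      obtain ⟨hk1, hk2⟩ := hb k h1 h2
      have hkM : |k| ≤ (M:ℤ) := abs_le.mpr ⟨hk1, hk2⟩
      have hbound : (d:ℝ) * |(k:ℝ)| ≤ (h:ℝ) := by
        have h5 : ((d:ℤ) * |k| : ℤ) ≤ (h:ℤ) := by
          calc (d:ℤ) * |k| ≤ (d:ℤ) * M := mul_le_mul_of_nonneg_left hkM (le_of_lt hd0')
            _ ≤ h := hdM'
        calc (d:ℝ) * |(k:ℝ)| = (((d:ℤ) * |k| : ℤ) : ℝ) := by push_cast; ring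
          _ ≤ h := by exact_mod_cast h5
      rw [max_eq_left]
      · push_cast
        rw [abs_mul, abs_of_nonneg (by positivity : (0:ℝ) ≤ (d:ℝ))]
      · have : |((d:ℤ)*k : ℤ)| = (d:ℤ) * |k| := by
          rw [abs_mul, abs_of_nonneg (le_of_lt hd0')]
        have h6 : |(((d:ℤ)*k : ℤ) : ℝ)| ≤ (h:ℝ) := by
          rw [← Int.cast_abs, this]
          exact_mod_cast (by
            calc (d:ℤ) * |k| ≤ (d:ℤ) * M := mul_le_mul_of_nonneg_left hkM (le_of_lt hd0')
              _ ≤ h := hdM')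
        linarith
  rw [key]
  have hcard : (Finset.Icc (-(M:ℤ)) (M:ℤ)).card = 2*M+1 := by
    rw [Int.card_Icc]; omega
  rw [Finset.sum_sub_distrib, Finset.sum_const, hcard, ← Finset.mul_sum]
  have habs : ∑ m ∈ Finset.Icc (-(M:ℤ)) (M:ℤ), |(m:ℝ)| = (M:ℝ) * (M+1) := by
    calc ∑ m ∈ Finset.Icc (-(M:ℤ)) (M:ℤ), |(m:ℝ)|
        = ((∑ m ∈ Finset.Icc (-(M:ℤ)) (M:ℤ), |m| : ℤ) : ℝ) := by push_cast; rfl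
      _ = (M:ℝ) * (M+1) := by rw [sum_abs_Icc]; push_cast; ring
  rw [habs]
  have hfr : Int.fract ((h:ℝ)/d) = ((h:ℝ) - d*M)/d := by
    have hhd : (h:ℝ)/d = (M:ℤ) + ((h:ℝ) - d*M)/d := by
      push_cast
      field_simp
      ring
    rw [hhd, Int.fract_intCast_add, Int.fract_eq_self.mpr]
    constructor
    · have : (d:ℝ)*M ≤ h := by exact_mod_cast hdM
      have hdr : (0:ℝ) < d := by exact_mod_cast hd
      apply div_nonneg (by linarith) (le_of_lt hdr)
    · rw [div_lt_one (by exact_mod_cast hd)]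
      have : (h:ℝ) < d*(M+1) := by exact_mod_cast hlt
      linarith
  rw [hfr]
  have hdr0 : (d:ℝ) ≠ 0 := by exact_mod_cast hd.ne'
  field_simp
  ring


lemma sum_moebius_div (n : ℕ) : ∑ d ∈ n.divisors, (moebius d : ℤ) = if n = 1 then 1 else 0 := by
  calc ∑ d ∈ n.divisors, (moebius d : ℤ) = (moebius * (zeta : ArithmeticFunction ℕ) : ArithmeticFunction ℤ) n := coe_mul_zeta_apply.symm
    _ = (1 : ArithmeticFunction ℤ) n := by rw [moebius_mul_coe_zeta]
    _ = _ := one_apply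

lemma ramanujanSum_eq (q : ℕ) (hq : 0 < q) (a : ℤ) :
    ramanujanSum q a = ∑ d ∈ q.divisors, (d:ℂ) * ((moebius (q/d) : ℤ) : ℂ) *
      (if (d:ℤ) ∣ a then 1 else 0) := by
  have hq0 : q ≠ 0 := hq.ne'
  rw [ramanujanSum, Finset.sum_filter]
  have step1 : ∀ j ∈ Finset.range q,
      (if Nat.Coprime j q then Complex.exp (2 * Real.pi * Complex.I * (j:ℂ) * (a:ℂ) / (q:ℂ)) else 0)
      = ∑ d ∈ q.divisors, (if d ∣ j then ((moebius d : ℤ):ℂ) else 0) *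
          Complex.exp (2 * Real.pi * Complex.I * (j:ℂ) * (a:ℂ) / (q:ℂ)) := by
    intro j _
    rw [← Finset.sum_mul]
    have hdiv : q.divisors.filter (· ∣ j) = (Nat.gcd j q).divisors := by
      ext d
      simp only [Finset.mem_filter, Nat.mem_divisors, Nat.dvd_gcd_iff]
      constructor
      · rintro ⟨⟨h1, _⟩, h2⟩; exact ⟨⟨h2, h1⟩, Nat.gcd_ne_zero_right hq0⟩
      · rintro ⟨⟨h1, h2⟩, _⟩; exact ⟨⟨h2, hq0⟩, h1⟩
    rw [← Finset.sum_filter, hdiv]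
    have : ∑ d ∈ (Nat.gcd j q).divisors, ((moebius d : ℤ):ℂ)
        = ((∑ d ∈ (Nat.gcd j q).divisors, (moebius d : ℤ) : ℤ) : ℂ) := by push_cast; rfl
    rw [this, sum_moebius_div]
    rcases eq_or_ne (Nat.gcd j q) 1 with hg | hg
    · simp [Nat.Coprime, hg]
    · simp [Nat.Coprime, hg]
  rw [Finset.sum_congr rfl step1, Finset.sum_comm]
  have step2 : ∀ d ∈ q.divisors,
      ∑ j ∈ Finset.range q, (if d ∣ j then ((moebius d : ℤ):ℂ) else 0) *
          Complex.exp (2 * Real.pi * Complex.I * (j:ℂ) * (a:ℂ) / (q:ℂ))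
      = ((moebius d : ℤ):ℂ) * (if ((q/d : ℕ):ℤ) ∣ a then ((q/d : ℕ):ℂ) else 0) := by
    intro d hd
    obtain ⟨hdq, -⟩ := Nat.mem_divisors.mp hd
    have hd0 : 0 < d := Nat.pos_of_dvd_of_pos hdq hq
    have hqd0 : 0 < q / d := Nat.div_pos (Nat.le_of_dvd hq hdq) hd0
    rw [← sum_exp_eq (q/d) hqd0 a, Finset.mul_sum]
    rw [← Finset.sum_filter_add_sum_filter_not (Finset.range q) (d ∣ ·)]
    have hz : ∑ j ∈ (Finset.range q).filter (¬ d ∣ ·),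
        (if d ∣ j then ((moebius d : ℤ):ℂ) else 0) *
          Complex.exp (2 * Real.pi * Complex.I * (j:ℂ) * (a:ℂ) / (q:ℂ)) = 0 := by
      apply Finset.sum_eq_zero
      intro j hj
      simp only [Finset.mem_filter] at hj
      simp [hj.2]
    rw [hz, add_zero]
    refine Finset.sum_nbij' (fun j => j / d) (fun k => d * k) ?_ ?_ ?_ ?_ ?_
    · intro j hj
      simp only [Finset.mem_filter, Finset.mem_range] at hj ⊢
      obtain ⟨hjq, hdj⟩ := hj
      exact Nat.div_lt_div_of_lt_of_dvd hdq hjq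
    · intro k hk
      simp only [Finset.mem_filter, Finset.mem_range] at hk ⊢
      constructor
      · calc d * k < d * (q / d) := (Nat.mul_lt_mul_left hd0).mpr hk
          _ = q := Nat.mul_div_cancel' hdq
      · exact Dvd.intro k rfl
    · intro j hj
      simp only [Finset.mem_filter] at hj
      exact Nat.mul_div_cancel' hj.2
    · intro k _
      exact Nat.mul_div_cancel_left k hd0
    · intro j hj
      simp only [Finset.mem_filter] at hj
      obtain ⟨-, hdj⟩ := hj
      rw [if_pos hdj]
      congr 1
      obtain ⟨k, rfl⟩ := hdj
      simp only [Nat.mul_div_cancel_left k hd0]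
      have h1 : (q:ℂ) = (d:ℂ) * ((q/d : ℕ):ℂ) := by
        rw [← Nat.cast_mul, Nat.mul_div_cancel' hdq]
      have hd0' : (d:ℂ) ≠ 0 := Nat.cast_ne_zero.mpr hd0.ne'
      have hqd0' : ((q/d : ℕ):ℂ) ≠ 0 := Nat.cast_ne_zero.mpr hqd0.ne'
      rw [h1]
      push_cast
      congr 1
      field_simp
  rw [Finset.sum_congr rfl step2]
  have step3 : ∀ d ∈ q.divisors,
      ((moebius d : ℤ):ℂ) * (if ((q/d : ℕ):ℤ) ∣ a then ((q/d : ℕ):ℂ) else 0)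
      = (fun x => ((x:ℕ):ℂ) * ((moebius (q/x) : ℤ):ℂ) * (if ((x:ℕ):ℤ) ∣ a then 1 else 0)) (q / d) := by
    intro d hd
    obtain ⟨hdq, -⟩ := Nat.mem_divisors.mp hd
    simp only
    rw [Nat.div_div_self hdq hq0]
    split_ifs <;> ring
  rw [Finset.sum_congr rfl step3]
  exact Nat.sum_div_divisors q (fun x => ((x:ℕ):ℂ) * ((moebius (q/x) : ℤ):ℂ) * (if ((x:ℕ):ℤ) ∣ a then 1 else 0))


/-- `Σ_a max(h-|a|,0)·c_q(a) = [q=1]·h² + Σ_{d|q} d²·μ(q/d)·{h/d}·(1-{h/d})`. -/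
theorem fejer_sum_ramanujan (q h : ℕ) (hq : 0 < q) (hh : 0 < h) :
    (∑ a ∈ Finset.Icc (-(h : ℤ)) (h : ℤ),
        ((max ((h : ℝ) - |(a : ℝ)|) 0 : ℝ) : ℂ) * ramanujanSum q a)
      = ((if q = 1 then ((h : ℝ) ^ 2) else 0)
          + ∑ d ∈ q.divisors, (d : ℝ) ^ 2 * (ArithmeticFunction.moebius (q / d) : ℝ)
              * Int.fract ((h : ℝ) / d) * (1 - Int.fract ((h : ℝ) / d)) : ℝ) := by
  have hq0 : q ≠ 0 := hq.ne'
  calc (∑ a ∈ Finset.Icc (-(h : ℤ)) (h : ℤ),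
        ((max ((h : ℝ) - |(a : ℝ)|) 0 : ℝ) : ℂ) * ramanujanSum q a)
      = ∑ d ∈ q.divisors, ((d : ℝ) * (moebius (q/d) : ℝ) : ℂ) *
          ((∑ a ∈ Finset.Icc (-(h:ℤ)) (h:ℤ),
            (if (d:ℤ) ∣ a then max ((h:ℝ) - |(a:ℝ)|) 0 else 0) : ℝ) : ℂ) := by
        rw [Finset.sum_congr rfl (fun a _ => by rw [ramanujanSum_eq q hq a, Finset.mul_sum])]
        rw [Finset.sum_comm]
        refine Finset.sum_congr rfl fun d hd => ?_
        have hcast : ((∑ a ∈ Finset.Icc (-(h:ℤ)) (h:ℤ),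
            (if (d:ℤ) ∣ a then max ((h:ℝ) - |(a:ℝ)|) 0 else 0) : ℝ) : ℂ)
            = ∑ a ∈ Finset.Icc (-(h:ℤ)) (h:ℤ),
              (if (d:ℤ) ∣ a then ((max ((h:ℝ) - |(a:ℝ)|) 0 : ℝ) : ℂ) else 0) := by
          push_cast [apply_ite (fun x : ℝ => (x : ℂ))]
          rfl
        rw [hcast, Finset.mul_sum]
        refine Finset.sum_congr rfl fun a _ => ?_
        split_ifs <;> push_cast <;> ring
    _ = ∑ d ∈ q.divisors, (((d : ℝ) * (moebius (q/d) : ℝ) *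
          ((h:ℝ)^2 / d + d * Int.fract ((h:ℝ)/d) * (1 - Int.fract ((h:ℝ)/d))) : ℝ) : ℂ) := by
        refine Finset.sum_congr rfl fun d hd => ?_
        obtain ⟨hdq, -⟩ := Nat.mem_divisors.mp hd
        have hd0 : 0 < d := Nat.pos_of_dvd_of_pos hdq hq
        rw [fejer_multiple_sum h d hh hd0]
        push_cast
        ring
    _ = (((∑ d ∈ q.divisors, (d : ℝ) * (moebius (q/d) : ℝ) *
          ((h:ℝ)^2 / d + d * Int.fract ((h:ℝ)/d) * (1 - Int.fract ((h:ℝ)/d))) : ℝ)) : ℂ) := by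
        push_cast
        rfl
    _ = _ := by
        congr 1
        have step : ∀ d ∈ q.divisors,
            (d : ℝ) * (moebius (q/d) : ℝ) *
              ((h:ℝ)^2 / d + d * Int.fract ((h:ℝ)/d) * (1 - Int.fract ((h:ℝ)/d)))
            = (h:ℝ)^2 * (moebius (q/d) : ℝ)
              + (d:ℝ)^2 * (moebius (q/d) : ℝ) * Int.fract ((h:ℝ)/d) * (1 - Int.fract ((h:ℝ)/d)) := by
          intro d hd
          obtain ⟨hdq, -⟩ := Nat.mem_divisors.mp hd
          have hd0 : (d:ℝ) ≠ 0 := Nat.cast_ne_zero.mpr (Nat.pos_of_dvd_of_pos hdq hq).ne'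
          field_simp
        rw [Finset.sum_congr rfl step, Finset.sum_add_distrib]
        congr 1
        rw [← Finset.mul_sum]
        have h1 : ∑ d ∈ q.divisors, ((moebius (q/d) : ℤ) : ℝ) = ∑ d ∈ q.divisors, ((moebius d : ℤ) : ℝ) :=
          Nat.sum_div_divisors q (fun d => ((moebius d : ℤ) : ℝ))
        rw [h1]
        have h2 : ∑ d ∈ q.divisors, ((moebius d : ℤ) : ℝ) = ((∑ d ∈ q.divisors, (moebius d : ℤ) : ℤ) : ℝ) := by
          push_cast; rfl
        rw [h2, sum_moebius_div]
        split_ifs <;> simp
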